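/- arXiv:2302.14810 — 5 statements merged into one kernel-verified Lean document; each statement's English description precedes it below -/
import Mathlib

section
/- Let Q be an orthogonal n×n real matrix (Qᵀ·Q = 1) and Ω a skew-symmetric n×n real matrix. Then Q·⁅Ω, P_0^i⁆·Qᵀ = 0 for all 1 ≤ i ≤ r if and only if Ω is block diagonal, i.e. Ω = Σ_{i=1}^{r} P_0^i · Ω · P_0^i. (This characterizes the vertical space of the main orbital map of the flag manifold at Q.) -/
open Matrix

/-- The standard projector `P_0^i` associated to a block-assignment `b : Fin n → Fin r`:
the diagonal matrix whose `(j,j)` entry is `1` if `b j = i` and `0` otherwise. -/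
def stdProj {n r : ℕ} (b : Fin n → Fin r) (i : Fin r) : Matrix (Fin n) (Fin n) ℝ :=
  Matrix.diagonal fun j => if b j = i then (1 : ℝ) else 0

lemma sum_proj_apply {n r : ℕ} (b : Fin n → Fin r) (Ω : Matrix (Fin n) (Fin n) ℝ)
    (j k : Fin n) :
    (∑ i, stdProj b i * Ω * stdProj b i) j k = if b j = b k then Ω j k else 0 := by
  have : ∀ i : Fin r, (stdProj b i * Ω * stdProj b i) j k
      = (if b j = i then 1 else 0) * Ω j k * (if b k = i then 1 else 0) := by
    intro i
    simp [stdProj, Matrix.mul_diagonal, Matrix.diagonal_mul, mul_comm, mul_assoc, mul_left_comm]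
  rw [Matrix.sum_apply]
  simp only [this]
  rcases eq_or_ne (b j) (b k) with h | h
  · rw [Finset.sum_eq_single (b j)]
    · simp [h]
    · intro i _ hi; simp [Ne.symm hi]
    · simp
  · rw [if_neg h]
    apply Finset.sum_eq_zero
    intro i _
    rcases eq_or_ne (b j) i with h1 | h1
    · have : b k ≠ i := fun hk => h (h1.trans hk.symm)
      simp [this]
    · simp [h1]

/-- Let `Q` be an orthogonal `n × n` real matrix and `Ω` a skew-symmetric `n × n` real matrix.
Then `Q·⁅Ω, P_0^i⁆·Qᵀ = 0` for all `i` iff `Ω` is block diagonal, i.e.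
`Ω = Σᵢ P_0^i · Ω · P_0^i`.  (Characterization of the vertical space of the main orbital map
of the flag manifold at `Q`.) -/
theorem vertical_space_characterization
    {n r : ℕ} (hn : 1 ≤ n) (q : Fin r → ℕ) (hq : ∀ i, 0 < q i)
    (b : Fin n → Fin r)
    (hb : ∀ i, (Finset.univ.filter fun j => b j = i).card = q i)
    (Q Ω : Matrix (Fin n) (Fin n) ℝ) (hQ : Qᵀ * Q = 1) (hΩ : Ωᵀ = -Ω) :
    (∀ i, Q * (Ω * stdProj b i - stdProj b i * Ω) * Qᵀ = 0)
      ↔ Ω = ∑ i, stdProj b i * Ω * stdProj b i := by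
  have hQ' : Q * Qᵀ = 1 := mul_eq_one_comm.mp hQ
  have hcomm_entry : ∀ i (j k : Fin n),
      (Ω * stdProj b i - stdProj b i * Ω) j k
        = Ω j k * ((if b k = i then 1 else 0) - (if b j = i then 1 else 0)) := by
    intro i j k
    simp [stdProj, Matrix.mul_diagonal, Matrix.diagonal_mul, Matrix.sub_apply,
      mul_sub, mul_comm]
  constructor
  · intro h
    have hc : ∀ i, Ω * stdProj b i - stdProj b i * Ω = 0 := by
      intro i
      have h2 : Qᵀ * (Q * (Ω * stdProj b i - stdProj b i * Ω) * Qᵀ) * Q = 0 := by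
        rw [h i]; simp
      calc Ω * stdProj b i - stdProj b i * Ω
          = Qᵀ * (Q * (Ω * stdProj b i - stdProj b i * Ω) * Qᵀ) * Q := by
            rw [Matrix.mul_assoc Q, ← Matrix.mul_assoc Qᵀ, hQ,
              Matrix.one_mul, Matrix.mul_assoc, hQ, Matrix.mul_one]
        _ = 0 := h2
    have hzero : ∀ j k : Fin n, b j ≠ b k → Ω j k = 0 := by
      intro j k hjk
      have := congrFun (congrFun (hc (b j)) j) k
      rw [hcomm_entry] at this
      simp only [if_pos rfl, if_neg (fun hk : b k = b j => hjk hk.symm)] at this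
      simpa using this
    ext j k
    rw [sum_proj_apply]
    rcases eq_or_ne (b j) (b k) with h1 | h1
    · simp [h1]
    · simp [h1, hzero j k h1]
  · intro hΩeq i
    have hzero : ∀ j k : Fin n, b j ≠ b k → Ω j k = 0 := by
      intro j k hjk
      have := congrFun (congrFun hΩeq j) k
      rw [sum_proj_apply, if_neg hjk] at this
      exact this
    have hc : Ω * stdProj b i - stdProj b i * Ω = 0 := by
      ext j k
      rw [hcomm_entry]
      rcases eq_or_ne (b j) (b k) with h1 | h1
      · rw [h1]; simp
      · simp [hzero j k h1]
    rw [hc]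
    simp
end

section
/- For every flag (P_i)_{1≤i≤r} of type I there exists a special orthogonal n×n real matrix Q (Qᵀ·Q = 1 and det Q = 1) such that Q·P_0^i·Qᵀ = P_i for all 1 ≤ i ≤ r. (Surjectivity of the main orbital map π_0^I : SO(n) → F^I.) -/
open Matrix
open scoped RealInnerProductSpace

/-- For every flag `(P_i)` of type `I` there exists a special orthogonal `n × n` real matrix
`Q` (`Qᵀ·Q = 1`, `det Q = 1`) such that `Q·P_0^i·Qᵀ = P_i` for all `i`.  (Surjectivity of the
main orbital map `π_0^I : SO(n) → F^I`.) -/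
theorem exists_special_orthogonal_generating_flag
    {n r : ℕ} (hn : 1 ≤ n) (q : Fin r → ℕ) (hq : ∀ i, 0 < q i)
    (b : Fin n → Fin r)
    (hb : ∀ i, (Finset.univ.filter fun j => b j = i).card = q i)
    (P : Fin r → Matrix (Fin n) (Fin n) ℝ)
    (hsymm : ∀ i, (P i)ᵀ = P i)
    (hidem : ∀ i, P i * P i = P i)
    (horth : ∀ i j, i ≠ j → P i * P j = 0)
    (hrank : ∀ i, (P i).rank = q i) :
    ∃ Q : Matrix (Fin n) (Fin n) ℝ,
      Qᵀ * Q = 1 ∧ Q.det = 1 ∧ ∀ i, Q * stdProj b i * Qᵀ = P i := by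
  classical
  -- the ranges of the projectors, viewed inside Euclidean space
  let V : Fin r → Submodule ℝ (EuclideanSpace ℝ (Fin n)) :=
    fun i => (LinearMap.range (P i).mulVecLin).map (WithLp.linearEquiv 2 ℝ (Fin n → ℝ)).symm.toLinearMap
  have hdim : ∀ i, Module.finrank ℝ (V i) = q i := fun i => (LinearEquiv.finrank_map_eq _ _).trans (hrank i)
  have hPmem : ∀ i (x : EuclideanSpace ℝ (Fin n)), x ∈ V i → (P i) *ᵥ x = x := by
    rintro i x ⟨y, ⟨a, rfl⟩, rfl⟩
    show (P i) *ᵥ ((P i) *ᵥ a) = (P i) *ᵥ a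
    rw [Matrix.mulVec_mulVec, hidem]
  have hPzero : ∀ i j, i ≠ j → ∀ (x : EuclideanSpace ℝ (Fin n)), x ∈ V j → (P i) *ᵥ x = 0 := by
    rintro i j hij x ⟨y, ⟨a, rfl⟩, rfl⟩
    show (P i) *ᵥ ((P j) *ᵥ a) = 0
    rw [Matrix.mulVec_mulVec, horth i j hij, Matrix.zero_mulVec]
  have hVorth : ∀ i j, i ≠ j → ∀ x ∈ V i, ∀ y ∈ V j, ⟪x, y⟫ = 0 := by
    intro i j hij x hx y hy
    have h1 : (P i) *ᵥ y = 0 := hPzero i j hij y hy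
    have h2 : (P i) *ᵥ x = x := hPmem i x hx
    have : ⟪x, y⟫ = x ⬝ᵥ y := by
      simp [PiLp.inner_apply, RCLike.inner_apply, dotProduct, mul_comm]
    rw [this, ← h2, ← hsymm i, Matrix.mulVec_transpose,
      ← Matrix.dotProduct_mulVec, h1, dotProduct_zero]
  -- orthonormal bases of each range
  let B : ∀ i, OrthonormalBasis (Fin (q i)) ℝ (V i) := fun i =>
    (stdOrthonormalBasis ℝ (V i)).reindex (finCongr (hdim i))
  let s : Fin r → Finset (Fin n) := fun i => Finset.univ.filter fun j => b j = i
  let τ : ∀ i, (s i) ≃ Fin (q i) := fun i => (s i).equivFinOfCardEq (hb i)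
  have hmem : ∀ j : Fin n, j ∈ s (b j) := fun j => by simp [s]
  -- a globally orthonormal family indexed by the sigma type
  let u : (Σ i, Fin (q i)) → EuclideanSpace ℝ (Fin n) := fun p => (B p.1 p.2 : EuclideanSpace ℝ (Fin n))
  have hu : ∀ p p' : (Σ i, Fin (q i)), ⟪u p, u p'⟫ = if p = p' then 1 else 0 := by
    rintro ⟨i, a⟩ ⟨i', a'⟩
    by_cases h : i = i'
    · subst h
      have hB := orthonormal_iff_ite.mp (B i).orthonormal a a'
      have : ⟪u ⟨i, a⟩, u ⟨i, a'⟩⟫ = ⟪B i a, B i a'⟫ := rfl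
      rw [this, hB]
      simp [Sigma.mk.inj_iff]
    · rw [if_neg (by simp [Sigma.mk.inj_iff, h]),
        hVorth i i' h _ (B i a).2 _ (B i' a').2]
  -- the columns
  let g : Fin n → (Σ i, Fin (q i)) := fun j => ⟨b j, τ (b j) ⟨j, hmem j⟩⟩
  have hginj : Function.Injective g := by
    have : Function.LeftInverse (fun p : (Σ i, Fin (q i)) => ((τ p.1).symm p.2 : Fin n)) g := by
      intro j
      simp [g, Equiv.symm_apply_apply]
    exact this.injective
  let v : Fin n → EuclideanSpace ℝ (Fin n) := fun j => u (g j)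
  have hvV : ∀ j, v j ∈ V (b j) := fun j => (B (b j) (τ (b j) ⟨j, hmem j⟩)).2
  have hv : ∀ j k : Fin n, ⟪v j, v k⟫ = if j = k then 1 else 0 := by
    intro j k
    rw [hu (g j) (g k)]
    simp [hginj.eq_iff]
  have hPv : ∀ i j, (P i) *ᵥ v j = if b j = i then v j else 0 := by
    intro i j
    by_cases h : b j = i
    · rw [if_pos h]; exact h ▸ hPmem (b j) (v j) (hvV j)
    · rw [if_neg h]; exact hPzero i (b j) (fun e => h e.symm) (v j) (hvV j)
  let Q : Matrix (Fin n) (Fin n) ℝ := Matrix.of fun k j => v j k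
  have hinner : ∀ j k : Fin n, ⟪v j, v k⟫ = ∑ m, v j m * v k m := by
    intro j k
    simp [PiLp.inner_apply, RCLike.inner_apply]
    exact Finset.sum_congr rfl fun m _ => mul_comm _ _
  have hQ1 : Qᵀ * Q = 1 := by
    ext j j'
    simp only [Matrix.mul_apply, Matrix.transpose_apply, Matrix.one_apply, Matrix.of_apply, Q]
    rw [← hinner j j', hv j j']
  have hQQ : Q * Qᵀ = 1 := mul_eq_one_comm.mp hQ1
  have hProj : ∀ i, Q * stdProj b i * Qᵀ = P i := by
    intro i
    have key : P i = P i * (Q * Qᵀ) := by rw [hQQ, Matrix.mul_one]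
    ext k l
    have hQS : ∀ k j, (Q * stdProj b i) k j = if b j = i then v j k else 0 := by
      intro k j
      rw [stdProj, Matrix.mul_diagonal]
      by_cases h : b j = i <;> simp [h, Q]
    have hL : (Q * stdProj b i * Qᵀ) k l = ∑ j, (if b j = i then v j k * v j l else 0) := by
      rw [Matrix.mul_apply]
      refine Finset.sum_congr rfl fun j _ => ?_
      rw [hQS k j, Matrix.transpose_apply]
      by_cases h : b j = i <;> simp [h, Q]
    have hR : (P i) k l = ∑ j, (if b j = i then v j k * v j l else 0) := by
      conv_lhs => rw [key]
      have e1 : (P i * (Q * Qᵀ)) k l = ∑ m, P i k m * ∑ j, v j m * v j l := by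
        simp [Matrix.mul_apply, Matrix.transpose_apply, Q]
      rw [e1]
      calc ∑ m, P i k m * ∑ j, v j m * v j l
          = ∑ m, ∑ j, P i k m * (v j m * v j l) := by
            exact Finset.sum_congr rfl fun m _ => Finset.mul_sum _ _ _
        _ = ∑ j, ∑ m, P i k m * (v j m * v j l) := Finset.sum_comm
        _ = ∑ j, (∑ m, P i k m * v j m) * v j l := by
            refine Finset.sum_congr rfl fun j _ => ?_
            rw [Finset.sum_mul]
            exact Finset.sum_congr rfl fun m _ => by ring
        _ = ∑ j, ((P i) *ᵥ v j) k * v j l := rfl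
        _ = ∑ j, (if b j = i then v j k * v j l else 0) := by
            refine Finset.sum_congr rfl fun j _ => ?_
            rw [hPv i j]
            by_cases h : b j = i <;> simp [h]
    rw [hL, hR]
  have hdet2 : Q.det * Q.det = 1 := by
    have := congrArg Matrix.det hQ1
    rwa [Matrix.det_mul, Matrix.det_transpose, Matrix.det_one] at this
  rcases mul_self_eq_one_iff.mp hdet2 with hdet | hdet
  · exact ⟨Q, hQ1, hdet, hProj⟩
  · -- flip the sign of one column
    let z : Fin n := ⟨0, hn⟩
    let d : Fin n → ℝ := fun j => if j = z then -1 else 1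
    have hdd : ∀ j, d j * d j = 1 := by
      intro j; by_cases h : j = z <;> simp [d, h]
    have hDD : Matrix.diagonal d * Matrix.diagonal d = 1 := by
      rw [Matrix.diagonal_mul_diagonal]
      have : (fun j => d j * d j) = fun _ => (1 : ℝ) := funext hdd
      rw [this, Matrix.diagonal_one]
    refine ⟨Q * Matrix.diagonal d, ?_, ?_, ?_⟩
    · rw [Matrix.transpose_mul, Matrix.diagonal_transpose]
      calc Matrix.diagonal d * Qᵀ * (Q * Matrix.diagonal d)
          = Matrix.diagonal d * (Qᵀ * Q) * Matrix.diagonal d := by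
            simp only [Matrix.mul_assoc]
        _ = 1 := by rw [hQ1, Matrix.mul_one, hDD]
    · rw [Matrix.det_mul, hdet, Matrix.det_diagonal]
      have : ∏ j, d j = -1 := by
        simp [d, Finset.prod_ite_eq']
      rw [this]; ring
    · intro i
      have hDSD : Matrix.diagonal d * stdProj b i * Matrix.diagonal d = stdProj b i := by
        ext a c
        rw [stdProj, Matrix.diagonal_mul_diagonal, Matrix.diagonal_mul_diagonal]
        rcases eq_or_ne a c with rfl | hac
        · rw [Matrix.diagonal_apply_eq, Matrix.diagonal_apply_eq]
          by_cases h2 : b a = i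
          · rw [if_pos h2, mul_one, hdd a]
          · rw [if_neg h2, mul_zero, zero_mul]
        · rw [Matrix.diagonal_apply_ne _ hac, Matrix.diagonal_apply_ne _ hac]
      calc Q * Matrix.diagonal d * stdProj b i * (Q * Matrix.diagonal d)ᵀ
          = Q * (Matrix.diagonal d * stdProj b i * Matrix.diagonal d) * Qᵀ := by
            rw [Matrix.transpose_mul, Matrix.diagonal_transpose]
            simp only [Matrix.mul_assoc]
        _ = P i := by rw [hDSD, hProj i]
end

section
/- Let Q be an orthogonal n×n real matrix (Qᵀ·Q = 1). Then Q·P_0^i·Qᵀ = P_0^i for all 1 ≤ i ≤ r if and only if Q is block diagonal, i.e. Q = Σ_{i=1}^{r} P_0^i · Q · P_0^i. (This identifies the isotropy group of the standard flag P_0 under the action Q · P := (Q·P_i·Qᵀ)_i with the block-diagonal orthogonal matrices.) -/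
open Matrix

lemma sum_entry {n r : ℕ} (b : Fin n → Fin r) (Q : Matrix (Fin n) (Fin n) ℝ)
    (j k : Fin n) :
    (∑ i, stdProj b i * Q * stdProj b i) j k = if b j = b k then Q j k else 0 := by
  simp only [Matrix.sum_apply, stdProj, Matrix.diagonal_mul, Matrix.mul_diagonal]
  rw [Finset.sum_eq_single (b j)]
  · by_cases h : b j = b k <;> simp [h, eq_comm]
  · intro i _ hi
    simp [Ne.symm hi]
  · intro h; exact absurd (Finset.mem_univ _) h

/-- Let `Q` be an orthogonal `n × n` real matrix.  Then `Q·P_0^i·Qᵀ = P_0^i` for all `i` iff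
`Q` is block diagonal, i.e. `Q = Σᵢ P_0^i · Q · P_0^i`.  (The isotropy group of the standard
flag consists of the block-diagonal orthogonal matrices.) -/
theorem isotropy_of_standard_flag_iff_block_diagonal
    {n r : ℕ} (hn : 1 ≤ n) (q : Fin r → ℕ) (hq : ∀ i, 0 < q i)
    (b : Fin n → Fin r)
    (hb : ∀ i, (Finset.univ.filter fun j => b j = i).card = q i)
    (Q : Matrix (Fin n) (Fin n) ℝ) (hQ : Qᵀ * Q = 1) :
    (∀ i, Q * stdProj b i * Qᵀ = stdProj b i)
      ↔ Q = ∑ i, stdProj b i * Q * stdProj b i := by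
  have hQ' : Q * Qᵀ = 1 := mul_eq_one_comm.mp hQ
  constructor
  · intro h
    have hcomm : ∀ i, Q * stdProj b i = stdProj b i * Q := by
      intro i
      have := congrArg (· * Q) (h i)
      simpa [Matrix.mul_assoc, hQ] using this
    have hzero : ∀ j k, b j ≠ b k → Q j k = 0 := by
      intro j k hjk
      have := congrFun (congrFun (hcomm (b k)) j) k
      simpa [stdProj, Matrix.mul_diagonal, Matrix.diagonal_mul, hjk] using this
    ext j k
    rw [sum_entry]
    by_cases h : b j = b k
    · simp [h]
    · simp [h, hzero j k h]
  · intro h i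
    have hzero : ∀ j k, b j ≠ b k → Q j k = 0 := by
      intro j k hjk
      have := congrFun (congrFun h j) k
      rw [sum_entry] at this
      simpa [hjk] using this
    have hcomm : Q * stdProj b i = stdProj b i * Q := by
      ext j k
      simp only [stdProj, Matrix.mul_diagonal, Matrix.diagonal_mul]
      by_cases hjk : b j = b k
      · simp [hjk]
      · simp [hzero j k hjk]
    rw [hcomm, Matrix.mul_assoc, hQ', Matrix.mul_one]
end

section
/- Let Q be an orthogonal n×n real matrix (Qᵀ·Q = 1 = Q·Qᵀ), set P_i := Q·P_0^i·Qᵀ, and let Ω be a skew-symmetric n×n real matrix that is horizontal, i.e. P_0^j·Ω·P_0^j = 0 for all 1 ≤ j ≤ r. Define Δ_i := Q·⁅Ω, P_0^i⁆·Qᵀ for 1 ≤ i ≤ r. Then (1/2) Σ_{i=1}^{r} ⁅Δ_i, P_i⁆ = Q·Ω·Qᵀ; equivalently, ((1/2) Σ_{i=1}^{r} ⁅Δ_i, P_i⁆)·Q = Q·Ω. (This is the algebraic content of the formula Δ^♯_Q = (1/2)(Σ_i ⁅Δ_i, P_i⁆)·Q for the horizontal lift of a tangent vector Δ to the flag manifold.)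 -/
open Matrix

lemma stdProj_idem {n r : ℕ} (b : Fin n → Fin r) (i : Fin r) :
    stdProj b i * stdProj b i = stdProj b i := by
  simp only [stdProj, Matrix.diagonal_mul_diagonal]
  ext j k
  rcases eq_or_ne j k with rfl | hjk
  · by_cases h : b j = i <;> simp [Matrix.diagonal_apply_eq, h]
  · simp [Matrix.diagonal_apply_ne _ hjk]

lemma stdProj_sum {n r : ℕ} (b : Fin n → Fin r) :
    ∑ i, stdProj b i = (1 : Matrix (Fin n) (Fin n) ℝ) := by
  ext j k
  rw [Matrix.sum_apply]
  rcases eq_or_ne j k with rfl | hjk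
  · simp [stdProj, Matrix.diagonal_apply_eq, Matrix.one_apply_eq]
  · simp [stdProj, Matrix.diagonal_apply_ne _ hjk, Matrix.one_apply_ne hjk]

/-- Let `Q` be an orthogonal `n × n` real matrix, `P_i := Q·P_0^i·Qᵀ`, and `Ω` a horizontal
skew-symmetric matrix (`P_0^j·Ω·P_0^j = 0` for all `j`).  With `Δ_i := Q·⁅Ω, P_0^i⁆·Qᵀ`, one
has `(1/2) Σᵢ ⁅Δ_i, P_i⁆ = Q·Ω·Qᵀ`; equivalently `((1/2) Σᵢ ⁅Δ_i, P_i⁆)·Q = Q·Ω`.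
(Algebraic content of the horizontal-lift formula `Δ^♯_Q = (1/2)(Σᵢ ⁅Δ_i, P_i⁆)·Q` for the
flag manifold.) -/
theorem horizontal_lift_formula_flag
    {n r : ℕ} (hn : 1 ≤ n) (q : Fin r → ℕ) (hq : ∀ i, 0 < q i)
    (b : Fin n → Fin r)
    (hb : ∀ i, (Finset.univ.filter fun j => b j = i).card = q i)
    (Q Ω : Matrix (Fin n) (Fin n) ℝ)
    (hQ : Qᵀ * Q = 1) (hQ' : Q * Qᵀ = 1) (hΩ : Ωᵀ = -Ω)
    (hhor : ∀ j, stdProj b j * Ω * stdProj b j = 0)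
    (P Δ : Fin r → Matrix (Fin n) (Fin n) ℝ)
    (hP : ∀ i, P i = Q * stdProj b i * Qᵀ)
    (hΔ : ∀ i, Δ i = Q * (Ω * stdProj b i - stdProj b i * Ω) * Qᵀ) :
    (1 / 2 : ℝ) • (∑ i, (Δ i * P i - P i * Δ i)) = Q * Ω * Qᵀ ∧
    ((1 / 2 : ℝ) • (∑ i, (Δ i * P i - P i * Δ i))) * Q = Q * Ω := by
  have h : ∀ A B : Matrix (Fin n) (Fin n) ℝ,
      (Q * A * Qᵀ) * (Q * B * Qᵀ) = Q * (A * B) * Qᵀ := by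
    intro A B
    have e : (Q * A * Qᵀ) * (Q * B * Qᵀ) = Q * A * (Qᵀ * Q) * (B * Qᵀ) := by
      simp only [Matrix.mul_assoc]
    rw [e, hQ, Matrix.mul_one, ← Matrix.mul_assoc, Matrix.mul_assoc Q A B]
  have key : ∀ i, Δ i * P i - P i * Δ i =
      Q * ((Ω * stdProj b i - stdProj b i * Ω) * stdProj b i
        - stdProj b i * (Ω * stdProj b i - stdProj b i * Ω)) * Qᵀ := by
    intro i
    rw [hΔ, hP, h, h, ← Matrix.sub_mul, ← Matrix.mul_sub]
  have sum_eq : ∑ i, (Δ i * P i - P i * Δ i) = Q * ((2 : ℝ) • Ω) * Qᵀ := by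
    rw [Finset.sum_congr rfl fun i _ => key i, ← Finset.sum_mul, ← Matrix.mul_sum]
    congr 2
    have this1 : ∀ i : Fin r, (Ω * stdProj b i - stdProj b i * Ω) * stdProj b i
        - stdProj b i * (Ω * stdProj b i - stdProj b i * Ω)
        = Ω * stdProj b i + stdProj b i * Ω := by
      intro i
      have h1 := stdProj_idem b i
      have h2 := hhor i
      simp only [Matrix.sub_mul, Matrix.mul_sub, Matrix.mul_assoc] at *
      rw [h1]
      rw [show stdProj b i * (Ω * stdProj b i) = 0 from h2]
      rw [show stdProj b i * (stdProj b i * Ω) = stdProj b i * Ω by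
        rw [← Matrix.mul_assoc]
        have := stdProj_idem b i
        rw [this]]
      abel
    rw [Finset.sum_congr rfl fun i _ => this1 i, Finset.sum_add_distrib,
      ← Matrix.mul_sum, ← Finset.sum_mul, stdProj_sum, Matrix.mul_one, Matrix.one_mul,
      two_smul, ← two_smul ℝ]
  constructor
  · rw [sum_eq, Matrix.mul_smul, Matrix.smul_mul, smul_smul]
    norm_num
  · rw [sum_eq, Matrix.smul_mul, Matrix.mul_assoc (Q * ((2:ℝ) • Ω)) Qᵀ Q, hQ,
      Matrix.mul_one, Matrix.mul_smul, smul_smul]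
    norm_num
end

section
/- Let J ⊆ ℝ be an open interval and, for each 1 ≤ i ≤ r, let P_i : J → Matrix (Fin n) (Fin n) ℝ be a map of class C¹ such that for every x ∈ J the family (P_i(x))_{1≤i≤r} is a flag of type I. Then there exists a map Q : J → Matrix (Fin n) (Fin n) ℝ of class C¹ such that for every x ∈ J: Q(x)ᵀ·Q(x) = 1, det Q(x) = 1, and Q(x)·P_0^i·Q(x)ᵀ = P_i(x) for all 1 ≤ i ≤ r. (A C¹ family of special orthogonal frames generating a C¹ family of flags.) -/
open Matrix

attribute [local instance] Matrix.normedAddCommGroup Matrix.normedSpace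

section Helpers
open Set Module
open scoped NNReal RealInnerProductSpace

variable {n : ℕ}

lemma hasDerivAt_matrix {f : ℝ → Matrix (Fin n) (Fin n) ℝ} {f' : Matrix (Fin n) (Fin n) ℝ} {x : ℝ} :
    HasDerivAt f f' x ↔ ∀ i j, HasDerivAt (fun t => f t i j) (f' i j) x := by
  exact hasDerivAt_pi.trans (forall_congr' fun i => hasDerivAt_pi)

lemma HasDerivAt.matmul {f g : ℝ → Matrix (Fin n) (Fin n) ℝ} {f' g' : Matrix (Fin n) (Fin n) ℝ} {x : ℝ}
    (hf : HasDerivAt f f' x) (hg : HasDerivAt g g' x) :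
    HasDerivAt (fun t => f t * g t) (f' * g x + f x * g') x := by
  rw [hasDerivAt_matrix] at *
  intro i j
  simp only [Matrix.mul_apply, Matrix.add_apply]
  rw [← Finset.sum_add_distrib]
  exact HasDerivAt.fun_sum fun k _ => ((hf i k).mul (hg k j)).congr_deriv (by ring)

lemma HasDerivAt.mattrans {f : ℝ → Matrix (Fin n) (Fin n) ℝ} {f' : Matrix (Fin n) (Fin n) ℝ} {x : ℝ}
    (hf : HasDerivAt f f' x) : HasDerivAt (fun t => (f t)ᵀ) f'ᵀ x := by
  rw [hasDerivAt_matrix] at *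
  exact fun i j => hf j i

lemma norm_matmul_le (A B : Matrix (Fin n) (Fin n) ℝ) : ‖A * B‖ ≤ n * ‖A‖ * ‖B‖ := by
  have h1 : (0:ℝ) ≤ n * ‖A‖ * ‖B‖ := by positivity
  rw [Matrix.norm_le_iff h1]
  intro i j
  rw [Matrix.mul_apply]
  calc ‖∑ k, A i k * B k j‖ ≤ ∑ k, ‖A i k * B k j‖ := norm_sum_le _ _
    _ ≤ ∑ _k : Fin n, ‖A‖ * ‖B‖ := by
        refine Finset.sum_le_sum fun k _ => ?_
        rw [norm_mul]
        exact mul_le_mul (Matrix.norm_entry_le_entrywise_sup_norm A)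
          (Matrix.norm_entry_le_entrywise_sup_norm B) (norm_nonneg _) (norm_nonneg _)
    _ = n * ‖A‖ * ‖B‖ := by simp [mul_assoc]


variable {E : Type*} [NormedAddCommGroup E] [NormedSpace ℝ E]

noncomputable def rad (ρ : ℝ) (x : E) : E := (ρ / max ρ ‖x‖) • x

lemma rad_eq_smul (ρ : ℝ) (x : E) : rad ρ x = (ρ / max ρ ‖x‖) • x := rfl

lemma norm_rad_le {ρ : ℝ} (hρ : 0 < ρ) (x : E) : ‖rad ρ x‖ ≤ ρ := by
  have hm : 0 < max ρ ‖x‖ := lt_max_of_lt_left hρ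
  rw [rad, norm_smul, Real.norm_eq_abs, abs_of_pos (by positivity)]
  rw [div_mul_eq_mul_div, div_le_iff₀ hm]
  have : ‖x‖ ≤ max ρ ‖x‖ := le_max_right _ _
  nlinarith [hρ.le, norm_nonneg x]

lemma rad_eq_self {ρ : ℝ} (hρ : 0 < ρ) {x : E} (h : ‖x‖ ≤ ρ) : rad ρ x = x := by
  rw [rad, max_eq_left h, div_self hρ.ne', one_smul]

lemma lipschitzWith_rad {ρ : ℝ} (hρ : 0 < ρ) : LipschitzWith 2 (rad (E := E) ρ) := by
  apply LipschitzWith.of_dist_le_mul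
  intro x y
  simp only [dist_eq_norm]
  have hmx : 0 < max ρ ‖x‖ := lt_max_of_lt_left hρ
  have hmy : 0 < max ρ ‖y‖ := lt_max_of_lt_left hρ
  set mx := max ρ ‖x‖ with hmxdef
  set my := max ρ ‖y‖ with hmydef
  have key : rad ρ x - rad ρ y = (ρ / mx) • (x - y) + ((ρ / mx) - (ρ / my)) • y := by
    simp [rad, smul_sub, sub_smul, mx, my]
  rw [key]
  set d := ‖x - y‖ with hd0
  have hdnn : 0 ≤ d := norm_nonneg _
  have h1 : ‖(ρ / mx) • (x - y)‖ ≤ d := by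
    rw [norm_smul, Real.norm_eq_abs, abs_of_pos (by positivity)]
    have : ρ / mx ≤ 1 := by rw [div_le_one hmx]; exact le_max_left _ _
    nlinarith
  have h2 : ‖((ρ / mx) - (ρ / my)) • y‖ ≤ d := by
    rw [norm_smul, Real.norm_eq_abs]
    have hmm : |my - mx| ≤ d := by
      have h3 : |max ‖y‖ ρ - max ‖x‖ ρ| ≤ |‖y‖ - ‖x‖| := abs_max_sub_max_le_abs _ _ _
      rw [max_comm ‖y‖ ρ, max_comm ‖x‖ ρ] at h3
      refine h3.trans ?_
      rw [hd0]
      have := abs_norm_sub_norm_le y x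
      rwa [norm_sub_rev y x] at this
    have hd : ρ / mx - ρ / my = ρ * (my - mx) / (mx * my) := by
      field_simp
    have habs : |ρ / mx - ρ / my| ≤ ρ * d / (mx * my) := by
      rw [hd, abs_div, abs_of_pos (by positivity : (0:ℝ) < mx * my), abs_mul, abs_of_pos hρ]
      exact div_le_div_of_nonneg_right (by nlinarith) (by positivity) |>.trans le_rfl
    have hyle : ‖y‖ ≤ my := le_max_right _ _
    calc |ρ / mx - ρ / my| * ‖y‖ ≤ (ρ * d / (mx * my)) * my :=
          mul_le_mul habs hyle (norm_nonneg _) (by positivity)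
      _ = ρ * d / mx := by field_simp
      _ ≤ d := by
          rw [div_le_iff₀ hmx]
          have : ρ ≤ mx := le_max_left _ _
          nlinarith
  calc ‖(ρ / mx) • (x - y) + ((ρ / mx) - (ρ / my)) • y‖
      ≤ ‖(ρ / mx) • (x - y)‖ + ‖((ρ / mx) - (ρ / my)) • y‖ := norm_add_le _ _
    _ ≤ d + d := add_le_add h1 h2
    _ = 2 * d := by ring


variable {E : Type*} [NormedAddCommGroup E] [NormedSpace ℝ E] [CompleteSpace E]

lemma ode_exists {v : ℝ → E → E} {a c t0 : ℝ} (ht0 : t0 ∈ Icc a c) (x0 : E)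
    {K : ℝ≥0} {C : ℝ} (hC : 0 ≤ C)
    (hcont : ∀ x, ContinuousOn (fun t => v t x) (Icc a c))
    (hlip : ∀ t ∈ Icc a c, LipschitzWith K (v t))
    (hbdd : ∀ t ∈ Icc a c, ∀ x, ‖v t x‖ ≤ C) :
    ∃ α : ℝ → E, α t0 = x0 ∧ ∀ t ∈ Icc a c, HasDerivWithinAt α (v t (α t)) (Icc a c) t := by
  have hR : 0 ≤ C * max (c - t0) (t0 - a) := by
    have : 0 ≤ max (c - t0) (t0 - a) := le_max_of_le_left (by linarith [ht0.2])
    positivity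
  have hpl : IsPicardLindelof v (tmin := a) (tmax := c) ⟨t0, ht0⟩ x0
      ⟨C * max (c - t0) (t0 - a), hR⟩ 0 ⟨C, hC⟩ K :=
    { lipschitzOnWith := fun t ht => (hlip t ht).lipschitzOnWith
      continuousOn := fun x _ => hcont x
      norm_le := fun t ht x _ => hbdd t ht x
      mul_max_le := by simp only [NNReal.coe_zero, sub_zero]; exact le_rfl }
  exact hpl.exists_eq_forall_mem_Icc_hasDerivWithinAt₀

lemma ode_unique {v : ℝ → E → E} {K : ℝ≥0} (hv : ∀ t, LipschitzWith K (v t))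
    {α β : ℝ → E} {a c t0 : ℝ} (ht0 : t0 ∈ Icc a c)
    (hα : ∀ t ∈ Icc a c, HasDerivWithinAt α (v t (α t)) (Icc a c) t)
    (hβ : ∀ t ∈ Icc a c, HasDerivWithinAt β (v t (β t)) (Icc a c) t)
    (heq : α t0 = β t0) : EqOn α β (Icc a c) := by
  have hvs : ∀ t, LipschitzOnWith K (v t) ((fun _ => univ) t) :=
    fun t => (hv t).lipschitzOnWith
  have hαc : ContinuousOn α (Icc a c) := fun t ht => (hα t ht).continuousWithinAt
  have hβc : ContinuousOn β (Icc a c) := fun t ht => (hβ t ht).continuousWithinAt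
  intro y hy
  rcases le_total t0 y with h | h
  · have key : EqOn α β (Icc t0 y) := by
      refine ODE_solution_unique_of_mem_Icc_right (fun t _ => hvs t)
        (hαc.mono (Icc_subset_Icc ht0.1 hy.2)) (fun t ht => ?_) (fun _ _ => trivial)
        (hβc.mono (Icc_subset_Icc ht0.1 hy.2)) (fun t ht => ?_) (fun _ _ => trivial) heq
      · refine (hα t ⟨ht0.1.trans ht.1, ht.2.le.trans hy.2⟩).mono_of_mem_nhdsWithin ?_
        rw [mem_nhdsWithin]
        exact ⟨Iio c, isOpen_Iio, lt_of_lt_of_le ht.2 hy.2,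
          fun z hz => ⟨(ht0.1.trans ht.1).trans hz.2, hz.1.le⟩⟩
      · refine (hβ t ⟨ht0.1.trans ht.1, ht.2.le.trans hy.2⟩).mono_of_mem_nhdsWithin ?_
        rw [mem_nhdsWithin]
        exact ⟨Iio c, isOpen_Iio, lt_of_lt_of_le ht.2 hy.2,
          fun z hz => ⟨(ht0.1.trans ht.1).trans hz.2, hz.1.le⟩⟩
    exact key ⟨h, le_rfl⟩
  · have key : EqOn α β (Icc y t0) := by
      refine ODE_solution_unique_of_mem_Icc_left (fun t _ => hvs t)
        (hαc.mono (Icc_subset_Icc hy.1 ht0.2)) (fun t ht => ?_) (fun _ _ => trivial)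
        (hβc.mono (Icc_subset_Icc hy.1 ht0.2)) (fun t ht => ?_) (fun _ _ => trivial) heq
      · refine (hα t ⟨hy.1.trans ht.1.le, ht.2.trans ht0.2⟩).mono_of_mem_nhdsWithin ?_
        rw [mem_nhdsWithin]
        exact ⟨Ioi a, isOpen_Ioi, lt_of_le_of_lt hy.1 ht.1,
          fun z hz => ⟨hz.1.le, hz.2.trans (ht.2.trans ht0.2)⟩⟩
      · refine (hβ t ⟨hy.1.trans ht.1.le, ht.2.trans ht0.2⟩).mono_of_mem_nhdsWithin ?_
        rw [mem_nhdsWithin]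
        exact ⟨Ioi a, isOpen_Ioi, lt_of_le_of_lt hy.1 ht.1,
          fun z hz => ⟨hz.1.le, hz.2.trans (ht.2.trans ht0.2)⟩⟩
    exact key ⟨le_rfl, h⟩

lemma lipschitzWith_matmul_left {L : ℝ} (hL : 0 ≤ L) (B : Matrix (Fin n) (Fin n) ℝ)
    (hB : ‖B‖ ≤ L) :
    LipschitzWith (⟨2 * n * L, by positivity⟩ : ℝ≥0)
      (fun Q : Matrix (Fin n) (Fin n) ℝ => B * rad 2 Q) := by
  apply LipschitzWith.of_dist_le_mul
  intro X Y
  simp only [dist_eq_norm, NNReal.coe_mk]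
  rw [← Matrix.mul_sub]
  have hr : ‖rad 2 X - rad 2 Y‖ ≤ 2 * ‖X - Y‖ := by
    have := (lipschitzWith_rad (E := Matrix (Fin n) (Fin n) ℝ) two_pos).dist_le_mul X Y
    simpa [dist_eq_norm] using this
  calc ‖B * (rad 2 X - rad 2 Y)‖ ≤ n * ‖B‖ * ‖rad 2 X - rad 2 Y‖ := norm_matmul_le _ _
    _ ≤ n * L * (2 * ‖X - Y‖) := by
        apply mul_le_mul (mul_le_mul_of_nonneg_left hB (Nat.cast_nonneg n)) hr
          (norm_nonneg _) (by positivity)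
    _ = 2 * n * L * ‖X - Y‖ := by ring

lemma continuousOn_matmul_const {A : ℝ → Matrix (Fin n) (Fin n) ℝ} {s : Set ℝ}
    (h : ContinuousOn A s) (R : Matrix (Fin n) (Fin n) ℝ) :
    ContinuousOn (fun t => A t * R) s := by
  have hlip : LipschitzWith (⟨n * ‖R‖, by positivity⟩ : ℝ≥0)
      (fun M : Matrix (Fin n) (Fin n) ℝ => M * R) := by
    apply LipschitzWith.of_dist_le_mul
    intro X Y
    simp only [dist_eq_norm, NNReal.coe_mk, ← Matrix.sub_mul]
    calc ‖(X - Y) * R‖ ≤ n * ‖X - Y‖ * ‖R‖ := norm_matmul_le _ _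
      _ = n * ‖R‖ * ‖X - Y‖ := by ring
  exact hlip.continuous.comp_continuousOn h

lemma global_flow {A : ℝ → Matrix (Fin n) (Fin n) ℝ} {J : Set ℝ} (hJopen : IsOpen J)
    (hconv : Convex ℝ J) (hAcont : ContinuousOn A J) {t0 : ℝ} (ht0 : t0 ∈ J)
    (Q0 : Matrix (Fin n) (Fin n) ℝ) :
    ∃ S : ℝ → Matrix (Fin n) (Fin n) ℝ, S t0 = Q0 ∧
      ∀ x ∈ J, HasDerivAt S (A x * rad 2 (S x)) x := by
  have hord : J.OrdConnected := hconv.ordConnected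
  -- existence of solutions on compact subintervals
  have hex : ∀ a c, Icc a c ⊆ J → t0 ∈ Icc a c →
      ∃ α : ℝ → Matrix (Fin n) (Fin n) ℝ, α t0 = Q0 ∧
        ∀ t ∈ Icc a c, HasDerivWithinAt α (A t * rad 2 (α t)) (Icc a c) t := by
    intro a c hsub h0
    obtain ⟨C, hC⟩ := isCompact_Icc.exists_bound_of_continuousOn (hAcont.mono hsub)
    set L := max C 1 with hLdef
    have hL0 : (0:ℝ) < L := lt_of_lt_of_le one_pos (le_max_right _ _)
    have hbd : ∀ t ∈ Icc a c, ‖A t‖ ≤ L := fun t ht => (hC t ht).trans (le_max_left _ _)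
    refine ode_exists h0 Q0 (C := n * L * 2) (by positivity)
      (fun x => continuousOn_matmul_const (hAcont.mono hsub) _)
      (fun t ht => lipschitzWith_matmul_left hL0.le _ (hbd t ht))
      (fun t ht x => ?_)
    calc ‖A t * rad 2 x‖ ≤ n * ‖A t‖ * ‖rad 2 x‖ := norm_matmul_le _ _
      _ ≤ n * L * 2 := by
          apply mul_le_mul (mul_le_mul_of_nonneg_left (hbd t ht) (Nat.cast_nonneg n))
            (norm_rad_le two_pos x) (norm_nonneg _) (by positivity)
  have hsol : ∀ x ∈ J, ∃ α : ℝ → Matrix (Fin n) (Fin n) ℝ, α t0 = Q0 ∧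
      ∀ t ∈ Icc (min t0 x) (max t0 x), HasDerivWithinAt α (A t * rad 2 (α t))
        (Icc (min t0 x) (max t0 x)) t := by
    intro x hx
    have hsub : Icc (min t0 x) (max t0 x) ⊆ J := by
      rcases le_total t0 x with h | h
      · rw [min_eq_left h, max_eq_right h]; exact hord.out ht0 hx
      · rw [min_eq_right h, max_eq_left h]; exact hord.out hx ht0
    exact hex _ _ hsub ⟨min_le_left _ _, le_max_left _ _⟩
  classical
  set S : ℝ → Matrix (Fin n) (Fin n) ℝ :=
    fun x => if hx : x ∈ J then (hsol x hx).choose x else Q0 with hSdef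
  -- compatibility with any solution on a compact subinterval
  have compat : ∀ a c, Icc a c ⊆ J → t0 ∈ Icc a c →
      ∀ β : ℝ → Matrix (Fin n) (Fin n) ℝ, β t0 = Q0 →
      (∀ t ∈ Icc a c, HasDerivWithinAt β (A t * rad 2 (β t)) (Icc a c) t) →
      ∀ y ∈ Icc a c, S y = β y := by
    intro a c hsub h0 β hβ0 hβ y hy
    have hyJ : y ∈ J := hsub hy
    obtain ⟨C, hC⟩ := isCompact_Icc.exists_bound_of_continuousOn (hAcont.mono hsub)
    set L := max C 1 with hLdef
    have hL0 : (0:ℝ) < L := lt_of_lt_of_le one_pos (le_max_right _ _)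
    have hbd : ∀ t ∈ Icc a c, ‖A t‖ ≤ L := fun t ht => (hC t ht).trans (le_max_left _ _)
    set m := min t0 y with hm
    set M := max t0 y with hM
    have hIsub : Icc m M ⊆ Icc a c :=
      Icc_subset_Icc (le_min h0.1 hy.1) (max_le h0.2 hy.2)
    set cl : ℝ → ℝ := fun t => max m (min t M) with hcl
    have hclmem : ∀ t, cl t ∈ Icc m M := by
      intro t
      constructor
      · exact le_max_left _ _
      · have h1 : min t M ≤ M := min_le_right _ _
        have h2 : m ≤ M := min_le_max
        simp only [hcl]
        exact max_le h2 h1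
    have hclid : ∀ t ∈ Icc m M, cl t = t := by
      intro t ht
      simp only [hcl]
      rw [min_eq_left ht.2, max_eq_right ht.1]
    set v : ℝ → Matrix (Fin n) (Fin n) ℝ → Matrix (Fin n) (Fin n) ℝ :=
      fun t Q => A (cl t) * rad 2 Q with hv
    have hvlip : ∀ t, LipschitzWith (⟨2 * n * L, by positivity⟩ : ℝ≥0) (v t) :=
      fun t => lipschitzWith_matmul_left hL0.le _ (hbd _ (hIsub (hclmem t)))
    set α : ℝ → Matrix (Fin n) (Fin n) ℝ := (hsol y hyJ).choose with hα
    have hαspec := (hsol y hyJ).choose_spec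
    have ht0I : t0 ∈ Icc m M := ⟨min_le_left _ _, le_max_left _ _⟩
    have hyI : y ∈ Icc m M := ⟨min_le_right _ _, le_max_right _ _⟩
    have hkey : EqOn α β (Icc m M) := by
      refine ode_unique hvlip ht0I (fun t ht => ?_) (fun t ht => ?_)
        (hαspec.1.trans hβ0.symm)
      · have := hαspec.2 t ht
        simp only [hv, hclid t ht]
        exact this
      · have := (hβ t (hIsub ht)).mono hIsub
        simpa only [hv, hclid t ht] using this
    have : S y = α y := by simp only [hSdef, dif_pos hyJ, hα]
    rw [this, hkey hyI]
  refine ⟨S, ?_, ?_⟩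
  · simp only [hSdef, dif_pos ht0]
    exact (hsol t0 ht0).choose_spec.1
  · intro x hx
    obtain ⟨ε, hε, hball⟩ := Metric.isOpen_iff.1 hJopen x hx
    have ha0 : x - ε / 2 ∈ J := by
      apply hball; rw [Metric.mem_ball, Real.dist_eq]
      rw [abs_of_nonpos (by linarith)]; linarith
    have hc0 : x + ε / 2 ∈ J := by
      apply hball; rw [Metric.mem_ball, Real.dist_eq]
      rw [abs_of_nonneg (by linarith)]; linarith
    set a := min (x - ε / 2) t0 with hadef
    set c := max (x + ε / 2) t0 with hcdef
    have haJ : a ∈ J := by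
      rcases min_choice (x - ε / 2) t0 with h | h <;> rw [hadef, h] <;> assumption
    have hcJ : c ∈ J := by
      rcases max_choice (x + ε / 2) t0 with h | h <;> rw [hcdef, h] <;> assumption
    have hax : a < x := lt_of_le_of_lt (min_le_left _ _) (by linarith)
    have hxc : x < c := lt_of_lt_of_le (by linarith) (le_max_left _ _)
    have hsub : Icc a c ⊆ J := hord.out haJ hcJ
    have ht0I : t0 ∈ Icc a c := ⟨min_le_right _ _, le_max_right _ _⟩
    obtain ⟨β, hβ0, hβ⟩ := hex a c hsub ht0I
    have hSβ : S =ᶠ[nhds x] β := by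
      filter_upwards [Ioo_mem_nhds hax hxc] with y hy
      exact compat a c hsub ht0I β hβ0 hβ y (Ioo_subset_Icc_self hy)
    have hβx : HasDerivAt β (A x * rad 2 (β x)) x :=
      (hβ x (Ioo_subset_Icc_self ⟨hax, hxc⟩)).hasDerivAt (Icc_mem_nhds hax hxc)
    have hSx : S x = β x := hSβ.eq_of_nhds
    rw [hSx]
    exact hβx.congr_of_eventuallyEq hSβ

lemma isBoundedBilinearMap_matmul :
    IsBoundedBilinearMap ℝ
      (fun p : Matrix (Fin n) (Fin n) ℝ × Matrix (Fin n) (Fin n) ℝ => p.1 * p.2) :=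
  { add_left := fun a b c => add_mul a b c
    smul_left := fun c a b => Matrix.smul_mul c a b
    add_right := fun a b c => mul_add a b c
    smul_right := fun c a b => Matrix.mul_smul a c b
    bound := ⟨n + 1, by positivity, fun A B => (norm_matmul_le A B).trans (by
      have h1 := norm_nonneg A
      have h2 := norm_nonneg B
      have h3 : (0:ℝ) ≤ n := Nat.cast_nonneg n
      nlinarith)⟩ }

lemma ContinuousOn.matmul {X : Type*} [TopologicalSpace X]
    {f g : X → Matrix (Fin n) (Fin n) ℝ} {s : Set X}
    (hf : ContinuousOn f s) (hg : ContinuousOn g s) :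
    ContinuousOn (fun x => f x * g x) s :=
  isBoundedBilinearMap_matmul.continuous.comp_continuousOn (hf.prodMk hg)

lemma const_of_hasDerivAt_zero {F : Type*} [NormedAddCommGroup F] [NormedSpace ℝ F] {J : Set ℝ}
    (hJopen : IsOpen J) (hconv : Convex ℝ J) {g : ℝ → F}
    (h : ∀ x ∈ J, HasDerivAt g (0:F) x) {x y : ℝ} (hx : x ∈ J) (hy : y ∈ J) : g x = g y := by
  refine hconv.is_const_of_fderivWithin_eq_zero (𝕜 := ℝ)
    (fun z hz => ((h z hz).differentiableAt).differentiableWithinAt) (fun z hz => ?_) hx hy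
  rw [fderivWithin_of_isOpen hJopen hz]
  have h2 : HasFDerivAt g ((1 : ℝ →L[ℝ] ℝ).smulRight (0:F)) z := (h z hz).hasFDerivAt
  rw [h2.fderiv]
  ext w
  simp

variable {r : ℕ}

lemma toEuclideanLin_matmul (M N : Matrix (Fin n) (Fin n) ℝ) :
    Matrix.toEuclideanLin (M * N) =
      (Matrix.toEuclideanLin M).comp (Matrix.toEuclideanLin N) := by
  rw [Matrix.toEuclideanLin_eq_toLin]
  exact Matrix.toLin_mul _ _ _ M N

lemma toEuclideanLin_one' : Matrix.toEuclideanLin (1 : Matrix (Fin n) (Fin n) ℝ) = LinearMap.id := by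
  rw [Matrix.toEuclideanLin_eq_toLin]
  exact Matrix.toLin_one _

section

variable (q : Fin r → ℕ) (P : Fin r → Matrix (Fin n) (Fin n) ℝ)

lemma sum_proj_eq_one (hqsum : ∑ i, q i = n)
    (hidem : ∀ i, P i * P i = P i)
    (horth : ∀ i j, i ≠ j → P i * P j = 0)
    (hrank : ∀ i, (P i).rank = q i) :
    ∑ i, P i = 1 := by
  classical
  set E := EuclideanSpace ℝ (Fin n)
  set f : Matrix (Fin n) (Fin n) ℝ → (E →ₗ[ℝ] E) := fun M => Matrix.toEuclideanLin M with hf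
  have fmul : ∀ M N, f (M * N) = (f M).comp (f N) := fun M N => toEuclideanLin_matmul M N
  set V : Fin r → Submodule ℝ E := fun i => LinearMap.range (f (P i)) with hV
  have hid : ∀ i, ∀ u ∈ V i, f (P i) u = u := by
    rintro i u ⟨a, rfl⟩
    rw [← LinearMap.comp_apply, ← fmul, hidem i]
  have hzero : ∀ i j, i ≠ j → ∀ u ∈ V j, f (P i) u = 0 := by
    rintro i j hij u ⟨a, rfl⟩
    rw [← LinearMap.comp_apply, ← fmul, horth i j hij]
    simp [hf]
  have hdim : ∀ i, finrank ℝ (V i) = q i := by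
    intro i
    rw [← hrank i]
    rw [Matrix.rank_eq_finrank_range_toLin (P i)
      (EuclideanSpace.basisFun (Fin n) ℝ).toBasis (EuclideanSpace.basisFun (Fin n) ℝ).toBasis]
    rw [hV, hf, Matrix.toEuclideanLin_eq_toLin_orthonormal]
  set Φ : (∀ i, V i) →ₗ[ℝ] E := LinearMap.lsum ℝ (fun i => V i) ℝ (fun i => (V i).subtype)
    with hΦdef
  have hΦ : ∀ x : ∀ i, V i, Φ x = ∑ i, (x i : E) := by
    intro x
    simp [hΦdef, LinearMap.lsum_apply]
  have key : ∀ (x : ∀ i, V i) (i : Fin r), f (P i) (∑ j, (x j : E)) = x i := by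
    intro x i
    rw [map_sum]
    rw [Finset.sum_eq_single i]
    · exact hid i _ (x i).2
    · intro j _ hji
      exact hzero i j (Ne.symm hji) _ (x j).2
    · intro h
      exact absurd (Finset.mem_univ i) h
  have hinj : Function.Injective Φ := by
    rw [← LinearMap.ker_eq_bot, Submodule.eq_bot_iff]
    intro x hx
    have h0 : Φ x = 0 := hx
    rw [hΦ] at h0
    funext i
    have := key x i
    rw [h0, map_zero] at this
    exact Subtype.ext this.symm
  have hcard : finrank ℝ (∀ i, V i) = finrank ℝ E := by
    rw [Module.finrank_pi_fintype, finrank_euclideanSpace]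
    simp only [hdim, Fintype.card_fin]
    exact hqsum
  have hsurj : Function.Surjective Φ :=
    (LinearMap.injective_iff_surjective_of_finrank_eq_finrank hcard).1 hinj
  have : f (∑ i, P i) = f 1 := by
    apply LinearMap.ext
    intro v
    obtain ⟨x, rfl⟩ := hsurj v
    rw [hΦ]
    show f (∑ i, P i) (∑ i, (x i : E)) = Matrix.toEuclideanLin 1 (∑ i, (x i : E))
    rw [toEuclideanLin_one']
    have hsum : f (∑ i, P i) = ∑ i, f (P i) := by
      simp only [hf]
      rw [map_sum]
    rw [hsum, LinearMap.sum_apply, LinearMap.id_apply]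
    exact Finset.sum_congr rfl fun i _ => key x i
  exact Matrix.toEuclideanLin.injective this

end

section
open scoped RealInnerProductSpace

set_option maxHeartbeats 2000000 in
lemma exists_initial_frame (hn : 1 ≤ n) (q : Fin r → ℕ) (hqsum : ∑ i, q i = n)
    (b : Fin n → Fin r)
    (hb : ∀ i, (Finset.univ.filter fun j => b j = i).card = q i)
    (P : Fin r → Matrix (Fin n) (Fin n) ℝ)
    (hsymm : ∀ i, (P i)ᵀ = P i)
    (hidem : ∀ i, P i * P i = P i)
    (horth : ∀ i j, i ≠ j → P i * P j = 0)
    (hrank : ∀ i, (P i).rank = q i) :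
    ∃ Q0 : Matrix (Fin n) (Fin n) ℝ, Q0ᵀ * Q0 = 1 ∧ Q0.det = 1 ∧
      ∀ i, Q0 * stdProj b i * Q0ᵀ = P i := by
  classical
  set E' := EuclideanSpace ℝ (Fin n)
  set f : Matrix (Fin n) (Fin n) ℝ → (E' →ₗ[ℝ] E') := fun M => Matrix.toEuclideanLin M with hf
  have fmul : ∀ M N, f (M * N) = (f M).comp (f N) := fun M N => toEuclideanLin_matmul M N
  set V : Fin r → Submodule ℝ E' := fun i => LinearMap.range (f (P i)) with hV
  have hid : ∀ i, ∀ u ∈ V i, f (P i) u = u := by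
    rintro i u ⟨a, rfl⟩
    rw [← LinearMap.comp_apply, ← fmul, hidem i]
  have hzero : ∀ i j, i ≠ j → ∀ u ∈ V j, f (P i) u = 0 := by
    rintro i j hij u ⟨a, rfl⟩
    rw [← LinearMap.comp_apply, ← fmul, horth i j hij]
    simp [hf]
  have hdim : ∀ i, Module.finrank ℝ (V i) = q i := by
    intro i
    rw [← hrank i]
    rw [Matrix.rank_eq_finrank_range_toLin (P i)
      (EuclideanSpace.basisFun (Fin n) ℝ).toBasis (EuclideanSpace.basisFun (Fin n) ℝ).toBasis]
    rw [hV, hf, Matrix.toEuclideanLin_eq_toLin_orthonormal]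
  -- orthogonality of the ranges
  have hherm : ∀ i, (P i)ᴴ = P i := fun i => by
    rw [Matrix.conjTranspose_eq_transpose_of_trivial]; exact hsymm i
  have horthV : ∀ i j, i ≠ j → ∀ u ∈ V i, ∀ w ∈ V j, ⟪u, w⟫ = 0 := by
    rintro i j hij u ⟨a, rfl⟩ w hw
    have hadj : ⟪Matrix.toEuclideanLin (P i) a, w⟫ = ⟪a, Matrix.toEuclideanLin ((P i)ᴴ) w⟫ := by
      rw [Matrix.toEuclideanLin_conjTranspose_eq_adjoint]
      exact (LinearMap.adjoint_inner_right _ _ _).symm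
    show ⟪Matrix.toEuclideanLin (P i) a, w⟫ = 0
    rw [hadj, hherm i]
    have : Matrix.toEuclideanLin (P i) w = 0 := hzero i j hij w hw
    rw [this, inner_zero_right]
  -- orthogonal family
  have hfam : OrthogonalFamily ℝ (fun i => V i) (fun i => (V i).subtypeₗᵢ) := by
    intro i j hij v w
    exact horthV i j hij v v.2 w w.2
  have hsum1 : ∑ i, P i = 1 := sum_proj_eq_one q P hqsum hidem horth hrank
  have hsup : ⨆ i, V i = ⊤ := by
    rw [eq_top_iff]
    intro v _
    have hv : v = ∑ i, f (P i) v := by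
      have h1 : f (∑ i, P i) v = v := by
        rw [hsum1]
        show Matrix.toEuclideanLin 1 v = v
        rw [toEuclideanLin_one']
        rfl
      conv_lhs => rw [← h1]
      simp only [hf]
      rw [map_sum, LinearMap.sum_apply]
    rw [hv]
    exact Submodule.sum_mem _ fun i _ =>
      Submodule.mem_iSup_of_mem i (LinearMap.mem_range_self _ v)
  have hint : DirectSum.IsInternal V :=
    DirectSum.isInternal_submodule_of_iSupIndep_of_iSup_eq_top hfam.independent hsup
  set B : ∀ i, OrthonormalBasis (Fin (q i)) ℝ (V i) :=
    fun i => (stdOrthonormalBasis ℝ (V i)).reindex (finCongr (hdim i)) with hB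
  have hcardfib : ∀ i, Fintype.card {j // b j = i} = q i := by
    intro i; rw [Fintype.card_subtype]; exact hb i
  set eqv : ∀ i, {j // b j = i} ≃ Fin (q i) := fun i => Fintype.equivFinOfCardEq (hcardfib i)
    with heqv
  set Ψfun : (Σ i, Fin (q i)) → Fin n := fun p => ((eqv p.1).symm p.2).1 with hΨfun
  have hΨinj : Function.Injective Ψfun := by
    rintro ⟨i, a⟩ ⟨i', a'⟩ h
    simp only [hΨfun] at h
    have hi : i = i' := by rw [← ((eqv i).symm a).2, ← ((eqv i').symm a').2, h]
    subst hi
    have h2 : (eqv i).symm a = (eqv i).symm a' := Subtype.ext h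
    rw [(eqv i).symm.injective h2]
  have hΨbij : Function.Bijective Ψfun := by
    rw [Fintype.bijective_iff_injective_and_card]
    refine ⟨hΨinj, ?_⟩
    rw [Fintype.card_sigma]
    simp [hqsum]
  set Ψ : (Σ i, Fin (q i)) ≃ Fin n := Equiv.ofBijective Ψfun hΨbij with hΨ
  have hΨsymm : ∀ j : Fin n, Ψ.symm j = ⟨b j, eqv (b j) ⟨j, rfl⟩⟩ := by
    intro j
    apply Ψ.injective
    rw [Equiv.apply_symm_apply]
    show j = Ψfun _
    simp only [hΨfun]
    rw [Equiv.symm_apply_apply]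
  set W : OrthonormalBasis (Fin n) ℝ E' := (hint.collectedOrthonormalBasis hfam B).reindex Ψ
    with hW
  have hWmem : ∀ j, (W j : E') ∈ V (b j) := by
    intro j
    rw [hW, OrthonormalBasis.reindex_apply, hΨsymm j]
    exact hint.collectedOrthonormalBasis_mem hfam B ⟨b j, eqv (b j) ⟨j, rfl⟩⟩
  have hWinner : ∀ j k, ⟪W j, W k⟫ = if j = k then (1:ℝ) else 0 := by
    intro j k
    have h1 := W.orthonormal
    rw [orthonormal_iff_ite] at h1
    exact h1 j k
  have hdot : ∀ j k, (∑ m, W j m * W k m) = if j = k then (1:ℝ) else 0 := by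
    intro j k
    rw [← hWinner j k, PiLp.inner_apply]
    simp [RCLike.inner_apply]
    exact Finset.sum_congr rfl fun _ _ => mul_comm _ _
  set Q1 : Matrix (Fin n) (Fin n) ℝ := Matrix.of fun k j => W j k with hQ1
  have hQ1o : Q1ᵀ * Q1 = 1 := by
    ext j k
    rw [Matrix.mul_apply, Matrix.one_apply, ← hdot j k]
    simp only [Matrix.transpose_apply, hQ1, Matrix.of_apply]
  have hframe : ∀ i, Q1 * stdProj b i * Q1ᵀ = P i := by
    intro i
    have hlin : Matrix.toEuclideanLin (Q1 * stdProj b i * Q1ᵀ) = Matrix.toEuclideanLin (P i) := by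
      apply Basis.ext W.toBasis
      intro k
      rw [OrthonormalBasis.coe_toBasis]
      have hR : Matrix.toEuclideanLin (P i) (W k) = if h : b k = i then (W k : E') else 0 := by
        by_cases h : b k = i
        · rw [dif_pos h]
          exact hid i (W k) (h ▸ hWmem k)
        · rw [dif_neg h]
          exact hzero i (b k) (fun hh => h hh.symm) _ (hWmem k)
      rw [hR, Matrix.toEuclideanLin_apply]
      have step1 : Q1ᵀ *ᵥ (W k).ofLp = Pi.single k 1 := by
        funext j
        rw [Matrix.mulVec, dotProduct, Pi.single_apply, ← hdot j k]
        simp only [Matrix.transpose_apply, hQ1, Matrix.of_apply]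
      have hsplit : Q1 * stdProj b i * Q1ᵀ = Q1 * (stdProj b i * Q1ᵀ) := by
        rw [Matrix.mul_assoc]
      rw [hsplit, ← Matrix.mulVec_mulVec, ← Matrix.mulVec_mulVec, step1]
      have step2 : stdProj b i *ᵥ (Pi.single k 1) =
          Pi.single k (if b k = i then (1:ℝ) else 0) := by
        rw [stdProj, Matrix.diagonal_mulVec_single, mul_one]
      rw [step2]
      by_cases h : b k = i
      · rw [dif_pos h, if_pos h]
        have step3 : Q1 *ᵥ (Pi.single k 1) = (W k).ofLp := by
          rw [Matrix.mulVec_single]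
          funext m
          simp [hQ1]
        rw [step3]
      · rw [dif_neg h, if_neg h]
        have step3 : Q1 *ᵥ (Pi.single k (0:ℝ)) = 0 := by
          rw [Matrix.mulVec_single]
          funext m
          simp
        rw [step3]
        simp
    exact Matrix.toEuclideanLin.injective hlin
  -- fix the determinant
  have hdetsq : Q1.det * Q1.det = 1 := by
    have h2 := congrArg Matrix.det hQ1o
    rwa [Matrix.det_mul, Matrix.det_transpose, Matrix.det_one] at h2
  set j0 : Fin n := ⟨0, hn⟩ with hj0
  set ε : Fin n → ℝ := fun j => if j = j0 then Q1.det else 1 with hε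
  have hεsq : ∀ j, ε j * ε j = 1 := by
    intro j
    simp only [hε]
    by_cases h : j = j0
    · simpa [h] using hdetsq
    · simp [h]
  have hεprod : ∏ j, ε j = Q1.det := by
    simp only [hε]
    rw [Finset.prod_eq_single j0 (fun j _ hj => if_neg hj) (fun h => absurd (Finset.mem_univ j0) h)]
    rw [if_pos rfl]
  set D : Matrix (Fin n) (Fin n) ℝ := Matrix.diagonal ε with hD
  have hDD : D * D = 1 := by
    rw [hD, Matrix.diagonal_mul_diagonal]
    have : (fun j => ε j * ε j) = fun _ => (1:ℝ) := funext hεsq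
    rw [this, Matrix.diagonal_one]
  refine ⟨Q1 * D, ?_, ?_, ?_⟩
  · rw [Matrix.transpose_mul, hD, Matrix.diagonal_transpose]
    calc Matrix.diagonal ε * Q1ᵀ * (Q1 * Matrix.diagonal ε)
        = Matrix.diagonal ε * (Q1ᵀ * Q1) * Matrix.diagonal ε := by
          simp only [Matrix.mul_assoc]
      _ = 1 := by rw [hQ1o, Matrix.mul_one, ← hD, hDD]
  · rw [Matrix.det_mul, hD, Matrix.det_diagonal, hεprod, hdetsq]
  · intro i
    have hmid : D * (stdProj b i * D) = stdProj b i := by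
      have hfun : (fun j => ε j * ((if b j = i then (1:ℝ) else 0) * ε j))
          = fun j => if b j = i then (1:ℝ) else 0 := by
        funext j
        by_cases h : b j = i
        · simp only [h, if_true, one_mul]
          exact hεsq j
        · simp [h]
      rw [hD, stdProj, Matrix.diagonal_mul_diagonal, Matrix.diagonal_mul_diagonal, hfun]
    calc Q1 * D * stdProj b i * (Q1 * D)ᵀ
        = Q1 * (D * (stdProj b i * D)) * Q1ᵀ := by
          rw [Matrix.transpose_mul, hD, Matrix.diagonal_transpose, ← hD]
          simp only [Matrix.mul_assoc]
      _ = P i := by rw [hmid]; exact hframe i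

end

end Helpers

/-- Let `J ⊆ ℝ` be an open interval and `(P_i(x))` a `C¹` family of flags of type `I`
parametrized by `x ∈ J`.  Then there exists a `C¹` map `Q : J → SO(n)` such that for every
`x ∈ J`, the frame `Q x` generates the flag `(P_i(x))`: `Q(x)ᵀ·Q(x) = 1`, `det Q(x) = 1` and
`Q(x)·P_0^i·Q(x)ᵀ = P_i(x)` for all `i`. -/
theorem exists_C1_special_orthogonal_frames_of_C1_flags
    {n r : ℕ} (hn : 1 ≤ n) (q : Fin r → ℕ) (hq : ∀ i, 0 < q i)
    (b : Fin n → Fin r)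
    (hb : ∀ i, (Finset.univ.filter fun j => b j = i).card = q i)
    (J : Set ℝ) (hJopen : IsOpen J) (hJconn : J.OrdConnected)
    (P : Fin r → ℝ → Matrix (Fin n) (Fin n) ℝ)
    (hC1 : ∀ i, ContDiffOn ℝ 1 (P i) J)
    (hsymm : ∀ x ∈ J, ∀ i, (P i x)ᵀ = P i x)
    (hidem : ∀ x ∈ J, ∀ i, P i x * P i x = P i x)
    (horth : ∀ x ∈ J, ∀ i j, i ≠ j → P i x * P j x = 0)
    (hrank : ∀ x ∈ J, ∀ i, (P i x).rank = q i) :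
    ∃ Q : ℝ → Matrix (Fin n) (Fin n) ℝ, ContDiffOn ℝ 1 Q J ∧
      ∀ x ∈ J, (Q x)ᵀ * Q x = 1 ∧ (Q x).det = 1 ∧
        ∀ i, Q x * stdProj b i * (Q x)ᵀ = P i x := by
  classical
  rcases J.eq_empty_or_nonempty with rfl | ⟨x0, hx0⟩
  · exact ⟨fun _ => 1, fun x hx => absurd hx (Set.notMem_empty x),
      fun x hx => absurd hx (Set.notMem_empty x)⟩
  have hconv : Convex ℝ J := convex_iff_ordConnected.2 hJconn
  have hqsum : ∑ i, q i = n := by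
    have h1 : (Finset.univ : Finset (Fin n)).card =
        ∑ i : Fin r, (Finset.univ.filter fun j => b j = i).card :=
      Finset.card_eq_sum_card_fiberwise (fun x _ => Finset.mem_univ (b x))
    simp only [hb, Finset.card_univ, Fintype.card_fin] at h1
    exact h1.symm
  set D : Fin r → ℝ → Matrix (Fin n) (Fin n) ℝ := fun i => deriv (P i) with hDdef
  have hdiffAt : ∀ x ∈ J, ∀ i, HasDerivAt (P i) (D i x) x := by
    intro x hx i
    exact (((hC1 i).differentiableOn one_ne_zero).differentiableAt (hJopen.mem_nhds hx)).hasDerivAt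
  have hnhds : ∀ x ∈ J, J ∈ nhds x := fun x hx => hJopen.mem_nhds hx
  have hDsym : ∀ x ∈ J, ∀ i, (D i x)ᵀ = D i x := by
    intro x hx i
    have h1 : HasDerivAt (fun t => (P i t)ᵀ) (D i x)ᵀ x := (hdiffAt x hx i).mattrans
    have h2 : (fun t => (P i t)ᵀ) =ᶠ[nhds x] P i :=
      Filter.eventuallyEq_of_mem (hnhds x hx) (fun y hy => hsymm y hy i)
    exact (h1.congr_of_eventuallyEq h2.symm).unique (hdiffAt x hx i)
  have hidem' : ∀ x ∈ J, ∀ i, D i x * P i x + P i x * D i x = D i x := by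
    intro x hx i
    have h1 : HasDerivAt (fun t => P i t * P i t) (D i x * P i x + P i x * D i x) x :=
      (hdiffAt x hx i).matmul (hdiffAt x hx i)
    have h2 : (fun t => P i t * P i t) =ᶠ[nhds x] P i :=
      Filter.eventuallyEq_of_mem (hnhds x hx) (fun y hy => hidem y hy i)
    exact (h1.congr_of_eventuallyEq h2.symm).unique (hdiffAt x hx i)
  have horth' : ∀ x ∈ J, ∀ i j, i ≠ j → D i x * P j x + P i x * D j x = 0 := by
    intro x hx i j hij
    have h1 : HasDerivAt (fun t => P i t * P j t) (D i x * P j x + P i x * D j x) x :=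
      (hdiffAt x hx i).matmul (hdiffAt x hx j)
    have h2 : (fun t => P i t * P j t) =ᶠ[nhds x] (fun _ => 0) :=
      Filter.eventuallyEq_of_mem (hnhds x hx) (fun y hy => horth y hy i j hij)
    exact (h1.congr_of_eventuallyEq h2.symm).unique (hasDerivAt_const x 0)
  have hsumP : ∀ x ∈ J, ∑ i, P i x = 1 := fun x hx =>
    sum_proj_eq_one q (fun i => P i x) hqsum (fun i => hidem x hx i)
      (fun i j hij => horth x hx i j hij) (fun i => hrank x hx i)
  have hPDP : ∀ x ∈ J, ∀ i, P i x * D i x * P i x = 0 := by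
    intro x hx i
    set p := P i x
    set d := D i x
    have hp : p * p = p := hidem x hx i
    have h : d * p + p * d = d := hidem' x hx i
    have e3 : p * (d * p + p * d) * p = p * d * (p * p) + p * p * d * p := by noncomm_ring
    rw [h, hp] at e3
    -- e3 : p * d * p = p * d * p + p * d * p
    calc p * d * p = p * d * p + p * d * p - p * d * p := by rw [add_sub_cancel_right]
      _ = p * d * p - p * d * p := by rw [← e3]
      _ = 0 := sub_self _
  -- the connection matrix
  set A : ℝ → Matrix (Fin n) (Fin n) ℝ :=
    fun x => (2⁻¹ : ℝ) • ∑ i, (D i x * P i x - P i x * D i x) with hAdef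
  have hPcont : ∀ i, ContinuousOn (P i) J := fun i => (hC1 i).continuousOn
  have hDcont : ∀ i, ContinuousOn (D i) J := by
    intro i
    have h0 : ContDiffOn ℝ ((0:ℕ) + 1) (P i) J := by
      norm_num
      exact hC1 i
    have h1 := (contDiffOn_succ_iff_deriv_of_isOpen hJopen).mp h0
    exact h1.2.2.continuousOn
  have hAcont : ContinuousOn A J := by
    apply ContinuousOn.fun_const_smul
    apply continuousOn_finset_sum
    intro i _
    exact ((hDcont i).matmul (hPcont i)).sub ((hPcont i).matmul (hDcont i))
  have hAskew : ∀ x ∈ J, (A x)ᵀ = -A x := by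
    intro x hx
    have hterm : ∀ i : Fin r, (D i x * P i x - P i x * D i x)ᵀ
        = -(D i x * P i x - P i x * D i x) := by
      intro i
      rw [Matrix.transpose_sub, Matrix.transpose_mul, Matrix.transpose_mul,
        hsymm x hx i, hDsym x hx i, neg_sub]
    show ((2⁻¹ : ℝ) • ∑ i, (D i x * P i x - P i x * D i x))ᵀ = _
    rw [Matrix.transpose_smul, Matrix.transpose_sum]
    simp only [hterm, Finset.sum_neg_distrib, smul_neg]
    rfl
  have hkey : ∀ x ∈ J, ∀ i, A x * P i x - P i x * A x = D i x := by
    intro x hx i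
    have hterm_i : (D i x * P i x - P i x * D i x) * P i x
        - P i x * (D i x * P i x - P i x * D i x) = D i x := by
      set p := P i x
      set d := D i x
      have hp : p * p = p := hidem x hx i
      have e : (d * p - p * d) * p - p * (d * p - p * d)
          = d * (p * p) + (p * p) * d - (p * d * p + p * d * p) := by noncomm_ring
      rw [hp, hPDP x hx i] at e
      rw [e]
      simp only [add_zero, sub_zero]
      exact hidem' x hx i
    have hterm_ne : ∀ j, j ≠ i → (D j x * P j x - P j x * D j x) * P i x
        - P i x * (D j x * P j x - P j x * D j x) = P j x * D i x + D i x * P j x := by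
      intro j hji
      set pj := P j x
      set pi := P i x
      set dj := D j x
      set di := D i x
      have hpj : pj * pj = pj := hidem x hx j
      have hPji : pj * pi = 0 := horth x hx j i hji
      have hPij : pi * pj = 0 := horth x hx i j (Ne.symm hji)
      have a1 : dj * pi = -(pj * di) :=
        eq_neg_of_add_eq_zero_left (horth' x hx j i hji)
      have a2 : pi * dj = -(di * pj) :=
        eq_neg_of_add_eq_zero_right (horth' x hx i j (Ne.symm hji))
      have e : (dj * pj - pj * dj) * pi - pi * (dj * pj - pj * dj)
          = dj * (pj * pi) - pj * (dj * pi) - (pi * dj) * pj + (pi * pj) * dj := by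
        noncomm_ring
      rw [hPji, hPij, a1, a2] at e
      rw [e]
      have e2 : dj * (0 : Matrix (Fin n) (Fin n) ℝ) - pj * (-(pj * di))
          - (-(di * pj)) * pj + (0 : Matrix (Fin n) (Fin n) ℝ) * dj
          = (pj * pj) * di + di * (pj * pj) := by noncomm_ring
      rw [e2, hpj]
    have hTcomm : (∑ j, (D j x * P j x - P j x * D j x)) * P i x
        - P i x * (∑ j, (D j x * P j x - P j x * D j x)) = D i x + D i x := by
      rw [Finset.sum_mul, Finset.mul_sum, ← Finset.sum_sub_distrib]
      rw [← Finset.sum_erase_add _ _ (Finset.mem_univ i)]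
      rw [Finset.sum_congr rfl (fun j hj =>
        hterm_ne j (Finset.ne_of_mem_erase hj)), hterm_i]
      rw [Finset.sum_add_distrib, ← Finset.sum_mul, ← Finset.mul_sum]
      rw [Finset.sum_erase_eq_sub (Finset.mem_univ i), hsumP x hx]
      have e : (1 - P i x) * D i x + D i x * (1 - P i x) + D i x
          = D i x + D i x + D i x - (D i x * P i x + P i x * D i x) := by noncomm_ring
      rw [e, hidem' x hx i]
      abel
    show (2⁻¹ : ℝ) • (∑ j, (D j x * P j x - P j x * D j x)) * P i x
        - P i x * ((2⁻¹ : ℝ) • ∑ j, (D j x * P j x - P j x * D j x)) = D i x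
    rw [Matrix.smul_mul, Matrix.mul_smul, ← smul_sub, hTcomm]
    rw [smul_add, ← add_smul]
    norm_num
  -- initial frame
  obtain ⟨Q0, hQ0o, hQ0det, hQ0frame⟩ :=
    exists_initial_frame hn q hqsum b hb (fun i => P i x0)
      (fun i => hsymm x0 hx0 i) (fun i => hidem x0 hx0 i)
      (fun i j hij => horth x0 hx0 i j hij) (fun i => hrank x0 hx0 i)
  -- global solution of the frame ODE
  obtain ⟨S, hS0, hS⟩ := global_flow hJopen hconv hAcont hx0 Q0
  -- first invariant : orthogonality
  have hG1 : ∀ x ∈ J, (S x)ᵀ * S x = 1 := by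
    have hG' : ∀ x ∈ J, HasDerivAt (fun t => (S t)ᵀ * S t) 0 x := by
      intro x hx
      have h := hS x hx
      have h2 : HasDerivAt (fun t => (S t)ᵀ * S t)
          ((A x * rad 2 (S x))ᵀ * S x + (S x)ᵀ * (A x * rad 2 (S x))) x :=
        (h.mattrans).matmul h
      have hval : (A x * rad 2 (S x))ᵀ * S x + (S x)ᵀ * (A x * rad 2 (S x)) = 0 := by
        rw [rad_eq_smul]
        set c := (2 : ℝ) / max 2 ‖S x‖
        rw [Matrix.mul_smul, Matrix.transpose_smul, Matrix.smul_mul, Matrix.mul_smul]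
        rw [Matrix.transpose_mul, hAskew x hx]
        simp only [Matrix.neg_mul, Matrix.mul_neg, smul_neg, Matrix.mul_assoc]
        exact neg_add_cancel _
      rw [hval] at h2
      exact h2
    intro x hx
    have := const_of_hasDerivAt_zero hJopen hconv hG' hx hx0
    rw [this, hS0, hQ0o]
  have hSS : ∀ x ∈ J, S x * (S x)ᵀ = 1 := fun x hx => mul_eq_one_comm.mp (hG1 x hx)
  -- the solution stays in the ball of radius 1, so the clamping is inactive
  have hSnorm : ∀ x ∈ J, ‖S x‖ ≤ 1 := by
    intro x hx
    rw [Matrix.norm_le_iff zero_le_one]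
    intro k j
    have h1 : ∑ m, S x m j * S x m j = 1 := by
      have := congrFun (congrFun (hG1 x hx) j) j
      simp only [Matrix.mul_apply, Matrix.transpose_apply, Matrix.one_apply_eq] at this
      exact this
    have h2 : S x k j * S x k j ≤ 1 := by
      rw [← h1]
      exact Finset.single_le_sum (fun m _ => mul_self_nonneg (S x m j)) (Finset.mem_univ k)
    rw [Real.norm_eq_abs]
    exact abs_le_one_iff_mul_self_le_one.mpr h2
  have hS' : ∀ x ∈ J, HasDerivAt S (A x * S x) x := by
    intro x hx
    have h := hS x hx
    rwa [rad_eq_self two_pos ((hSnorm x hx).trans one_le_two)] at h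
  -- second invariant : conjugation of the projectors
  have hH : ∀ x ∈ J, ∀ i, (S x)ᵀ * P i x * S x = stdProj b i := by
    have hH' : ∀ i, ∀ x ∈ J, HasDerivAt (fun t => (S t)ᵀ * P i t * S t) 0 x := by
      intro i x hx
      have h := hS' x hx
      have h2 : HasDerivAt (fun t => (S t)ᵀ * P i t * S t)
          (((A x * S x)ᵀ * P i x + (S x)ᵀ * D i x) * S x
            + ((S x)ᵀ * P i x) * (A x * S x)) x :=
        ((h.mattrans).matmul (hdiffAt x hx i)).matmul h
      have hval : ((A x * S x)ᵀ * P i x + (S x)ᵀ * D i x) * S x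
          + ((S x)ᵀ * P i x) * (A x * S x) = 0 := by
        rw [← hkey x hx i, Matrix.transpose_mul, hAskew x hx]
        noncomm_ring
      rw [hval] at h2
      exact h2
    intro x hx i
    have h1 := const_of_hasDerivAt_zero hJopen hconv (hH' i) hx hx0
    rw [h1, hS0]
    -- Q0ᵀ * P i x0 * Q0 = stdProj b i
    rw [← hQ0frame i]
    have hQ0o' : Q0 * Q0ᵀ = 1 := mul_eq_one_comm.mp hQ0o
    calc Q0ᵀ * (Q0 * stdProj b i * Q0ᵀ) * Q0
        = (Q0ᵀ * Q0) * stdProj b i * (Q0ᵀ * Q0) := by noncomm_ring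
      _ = stdProj b i := by rw [hQ0o]; simp
  have hframe : ∀ x ∈ J, ∀ i, S x * stdProj b i * (S x)ᵀ = P i x := by
    intro x hx i
    rw [← hH x hx i]
    calc S x * ((S x)ᵀ * P i x * S x) * (S x)ᵀ
        = (S x * (S x)ᵀ) * P i x * (S x * (S x)ᵀ) := by noncomm_ring
      _ = P i x := by rw [hSS x hx]; simp
  -- determinant
  have hScont : ContinuousOn S J := fun x hx => (hS' x hx).continuousAt.continuousWithinAt
  have hdet1 : ∀ x ∈ J, (S x).det = 1 := by
    have hdcont : ContinuousOn (fun x => (S x).det) J :=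
      Continuous.matrix_det continuous_id |>.comp_continuousOn hScont
    have hdsq : ∀ x ∈ J, (S x).det * (S x).det = 1 := by
      intro x hx
      have := congrArg Matrix.det (hG1 x hx)
      rwa [Matrix.det_mul, Matrix.det_transpose, Matrix.det_one] at this
    have hdx0 : (S x0).det = 1 := by rw [hS0, hQ0det]
    intro x hx
    rcases mul_self_eq_one_iff.mp (hdsq x hx) with h | h
    · exact h
    · exfalso
      have hpre : IsPreconnected J := hconv.isPreconnected
      have h0mem : (0:ℝ) ∈ Set.Icc ((S x).det) ((S x0).det) := by
        rw [h, hdx0]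
        norm_num
      obtain ⟨z, hz, hz0⟩ := hpre.intermediate_value hx hx0 hdcont h0mem
      have hz0' : (S z).det = 0 := hz0
      have := hdsq z hz
      rw [hz0'] at this
      norm_num at this
  -- smoothness
  have hCD : ContDiffOn ℝ 1 S J := by
    have h1 : ContDiffOn ℝ ((0:ℕ) + 1) S J := by
      rw [contDiffOn_succ_iff_deriv_of_isOpen hJopen]
      refine ⟨fun x hx => (hS' x hx).differentiableAt.differentiableWithinAt, ?_, ?_⟩
      · intro h; exact absurd h (by norm_num)
      · have heq : Set.EqOn (deriv S) (fun x => A x * S x) J := fun x hx => (hS' x hx).deriv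
        have h2 : ContinuousOn (deriv S) J := (hAcont.matmul hScont).congr heq
        exact contDiffOn_zero.mpr h2
    norm_num at h1
    exact h1
  exact ⟨S, hCD, fun x hx => ⟨hG1 x hx, hdet1 x hx, fun i => hframe x hx i⟩⟩
end
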